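/- Let (Ω, 𝓕, μ) be a probability space, let S : Ω → ℝ^d be measurable, and let K be a symmetric d×d real matrix. Suppose that for every τ ∈ ℝ^d the function ω ↦ exp(⟨τ, S(ω)⟩ − ½ τᵀKτ) is integrable with ∫ exp(⟨τ, S(ω)⟩ − ½ τᵀKτ) dμ(ω) = 1, and that for every τ ≠ 0 the event {ω : ⟨τ, S(ω)⟩ ≠ 0} has positive measure. Then K is positive definite: τᵀKτ > 0 for every τ ≠ 0. -/

import Mathlib

open MeasureTheory Matrix
open scoped BigOperators

/-- If the linear-quadratic local representation normalizes,
`∫ exp(⟨τ,S⟩ − ½τᵀKτ) dμ = 1` for every `τ`, and `⟨τ,S⟩` is not almost surely zero for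
`τ ≠ 0`, then the symmetric matrix `K` is positive definite. -/
theorem quadratic_term_posDef {Ω : Type*} [MeasurableSpace Ω]
    (μ : Measure Ω) [IsProbabilityMeasure μ]
    {d : ℕ} (S : Ω → (Fin d → ℝ)) (hS : Measurable S)
    (K : Matrix (Fin d) (Fin d) ℝ) (hK : K.IsSymm)
    (hint : ∀ τ : Fin d → ℝ,
      Integrable (fun ω => Real.exp (τ ⬝ᵥ S ω - (1 / 2) * (τ ⬝ᵥ K.mulVec τ))) μ)
    (hnorm : ∀ τ : Fin d → ℝ,
      ∫ ω, Real.exp (τ ⬝ᵥ S ω - (1 / 2) * (τ ⬝ᵥ K.mulVec τ)) ∂μ = 1)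
    (hnz : ∀ τ : Fin d → ℝ, τ ≠ 0 → 0 < μ {ω | τ ⬝ᵥ S ω ≠ 0}) :
    ∀ τ : Fin d → ℝ, τ ≠ 0 → 0 < τ ⬝ᵥ K.mulVec τ := by
  intro τ hτ
  set Q : ℝ := τ ⬝ᵥ K.mulVec τ with hQ
  set X : Ω → ℝ := fun ω => τ ⬝ᵥ S ω with hX
  have hQneg : (-τ) ⬝ᵥ K.mulVec (-τ) = Q := by
    simp [Matrix.mulVec_neg, neg_dotProduct, dotProduct_neg, hQ]
  have hXneg : ∀ ω, (-τ) ⬝ᵥ S ω = -(X ω) := by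
    intro ω; simp [hX, neg_dotProduct]
  -- algebraic identity: exp x + exp (-x) - 2 = (exp (x/2) - exp (-(x/2)))^2
  have hid : ∀ x : ℝ, Real.exp x + Real.exp (-x) - 2
      = (Real.exp (x/2) - Real.exp (-(x/2)))^2 := by
    intro x
    have h1 : Real.exp (x/2) * Real.exp (x/2) = Real.exp x := by
      rw [← Real.exp_add]; ring_nf
    have h2 : Real.exp (-(x/2)) * Real.exp (-(x/2)) = Real.exp (-x) := by
      rw [← Real.exp_add]; ring_nf
    have h3 : Real.exp (x/2) * Real.exp (-(x/2)) = 1 := by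
      rw [← Real.exp_add]; simp
    nlinarith [h1, h2, h3]
  have key : ∀ (f : Ω → ℝ), Integrable (fun ω => Real.exp (f ω - (1/2) * Q)) μ →
      (∫ ω, Real.exp (f ω - (1/2) * Q) ∂μ = 1) →
      Integrable (fun ω => Real.exp (f ω)) μ ∧
      ∫ ω, Real.exp (f ω) ∂μ = Real.exp ((1/2) * Q) := by
    intro f hi hn
    have heq : (fun ω => Real.exp (f ω - (1/2) * Q)) =
        fun ω => Real.exp (f ω) * Real.exp (-((1/2) * Q)) := by
      funext ω; rw [← Real.exp_add]; ring_nf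
    rw [heq] at hi hn
    have hi' : Integrable (fun ω => Real.exp (f ω)) μ := by
      have := hi.mul_const (Real.exp ((1/2) * Q))
      simpa [mul_assoc, ← Real.exp_add] using this
    refine ⟨hi', ?_⟩
    rw [integral_mul_const] at hn
    have h' := eq_inv_of_mul_eq_one_left
      (by rw [mul_comm]; exact hn :
        Real.exp (-((1/2) * Q)) * (∫ a, Real.exp (f a) ∂μ) = 1)
    have h'' : (∫ a, Real.exp (f a) ∂μ) = (Real.exp (-((1/2) * Q)))⁻¹ := by
      rw [h', inv_inv]
    rw [h'', ← Real.exp_neg, neg_neg]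
  obtain ⟨hi1, hn1⟩ := key X (hint τ) (hnorm τ)
  have hint2 := hint (-τ)
  have hnorm2 := hnorm (-τ)
  simp only [hQneg, hXneg] at hint2 hnorm2
  obtain ⟨hi2, hn2⟩ := key (fun ω => -(X ω)) hint2 hnorm2
  set g : Ω → ℝ := fun ω => Real.exp (X ω) + Real.exp (-(X ω)) - 2 with hg
  have hgnn : ∀ ω, 0 ≤ g ω := by
    intro ω; rw [hg]; simp only; rw [hid]; positivity
  have hi12 : Integrable (fun ω => Real.exp (X ω) + Real.exp (-(X ω))) μ := hi1.add hi2
  have hgint : Integrable g μ := hi12.sub (integrable_const 2)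
  have hsupp : Function.support g = {ω | X ω ≠ 0} := by
    ext ω
    simp only [Function.mem_support, Set.mem_setOf_eq]
    constructor
    · intro h hx
      apply h
      norm_num [hg, hx]
    · intro h hgz
      apply h
      have h2 : (Real.exp (X ω / 2) - Real.exp (-(X ω / 2)))^2 = 0 := by
        rw [← hid]; simpa [hg] using hgz
      have h3 : Real.exp (X ω / 2) = Real.exp (-(X ω / 2)) := by
        have := sq_eq_zero_iff.mp h2; linarith
      have := Real.exp_injective h3
      linarith
  have hgpos : 0 < ∫ ω, g ω ∂μ := by
    rw [integral_pos_iff_support_of_nonneg hgnn hgint, hsupp]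
    exact hnz τ hτ
  have hintg : ∫ ω, g ω ∂μ = 2 * Real.exp ((1/2) * Q) - 2 := by
    simp only [hg]
    rw [integral_sub hi12 (integrable_const 2), integral_add hi1 hi2, hn1, hn2]
    simp [measure_univ]
    ring
  rw [hintg] at hgpos
  have h1 : (1:ℝ) < Real.exp ((1/2) * Q) := by linarith
  have h2 := Real.exp_lt_exp.mp (by simpa using h1 : Real.exp 0 < Real.exp ((1/2)*Q))
  linarith
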